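/- Pointwise limit as \(L\to\infty\): for every \((x,\rho)\) with \(\rho>0\) (or \(\rho=0\), \(|x|>M\)), the periodic Ernst potential \({\cal E}_L(x,\rho)={\cal E}_0(x,\rho)\prod_{n\ge1}{\cal E}_0(x+nL,\rho){\cal E}_0(x-nL,\rho)e^{4M/(nL)}\) converges to the Schwarzschild Ernst potential \({\cal E}_0(x,\rho)\) as \(L\to\infty\). -/

import Mathlib

noncomputable def ernst0 (M x ρ : ℝ) : ℝ :=
  (Real.sqrt ((x - M) ^ 2 + ρ ^ 2) + Real.sqrt ((x + M) ^ 2 + ρ ^ 2) - 2 * M) /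
  (Real.sqrt ((x - M) ^ 2 + ρ ^ 2) + Real.sqrt ((x + M) ^ 2 + ρ ^ 2) + 2 * M)

noncomputable def ernstPeriodic (M L x ρ : ℝ) : ℝ :=
  ernst0 M x ρ * ∏' n : ℕ,
    (ernst0 M (x + (n + 1) * L) ρ * ernst0 M (x - (n + 1) * L) ρ *
      Real.exp (4 * M / ((n + 1) * L)))

open Real Filter

private lemma sqrt_lb (a ρ : ℝ) : |a| ≤ Real.sqrt (a ^ 2 + ρ ^ 2) := by
  rw [← Real.sqrt_sq_eq_abs]
  exact Real.sqrt_le_sqrt (by nlinarith [sq_nonneg ρ])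

private lemma sqrt_ub (a ρ : ℝ) : Real.sqrt (a ^ 2 + ρ ^ 2) ≤ |a| + |ρ| := by
  have h : a ^ 2 + ρ ^ 2 ≤ (|a| + |ρ|) ^ 2 := by
    nlinarith [sq_abs a, sq_abs ρ, mul_nonneg (abs_nonneg a) (abs_nonneg ρ)]
  calc Real.sqrt (a ^ 2 + ρ ^ 2) ≤ Real.sqrt ((|a| + |ρ|) ^ 2) := Real.sqrt_le_sqrt h
    _ = |a| + |ρ| := Real.sqrt_sq (by positivity)

private lemma log_ratio_bounds (M p : ℝ) (hM : 0 < M) (hp : 2 * M < p) :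
    0 < (p - 2 * M) / (p + 2 * M) ∧
    -(4 * M / (p - 2 * M)) ≤ Real.log ((p - 2 * M) / (p + 2 * M)) ∧
    Real.log ((p - 2 * M) / (p + 2 * M)) ≤ -(4 * M / (p + 2 * M)) := by
  have h1 : 0 < p - 2 * M := by linarith
  have h2 : 0 < p + 2 * M := by linarith
  have hpos : 0 < (p - 2 * M) / (p + 2 * M) := div_pos h1 h2
  refine ⟨hpos, ?_, ?_⟩
  · have hinv := Real.log_le_sub_one_of_pos (inv_pos.mpr hpos)
    rw [Real.log_inv] at hinv
    have he : ((p - 2 * M) / (p + 2 * M))⁻¹ - 1 = 4 * M / (p - 2 * M) := by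
      rw [inv_div]
      field_simp
      ring
    linarith
  · have h := Real.log_le_sub_one_of_pos hpos
    have he : (p - 2 * M) / (p + 2 * M) - 1 = -(4 * M / (p + 2 * M)) := by
      field_simp
      ring
    linarith

private lemma factor_bound (M x ρ : ℝ) (hM : 0 < M) (t : ℝ)
    (ht : 2 * (|x| + 2 * M + |ρ|) ≤ t) :
    0 < ernst0 M (x + t) ρ * ernst0 M (x - t) ρ * Real.exp (4 * M / t) ∧
    |Real.log (ernst0 M (x + t) ρ * ernst0 M (x - t) ρ * Real.exp (4 * M / t))| ≤
      8 * M * (|x| + 2 * M + |ρ|) / t ^ 2 := by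
  set B := |x| + 2 * M + |ρ| with hB
  have hx0 := abs_nonneg x
  have hρ0 := abs_nonneg ρ
  have hBpos : 0 < B := by rw [hB]; linarith
  have ht0 : 0 < t := by linarith
  have htB : 0 < t + B := by linarith
  have htB' : 0 < t - B := by linarith
  have key : ∀ y : ℝ, t - |x| ≤ |y| → |y| ≤ t + |x| →
      0 < ernst0 M y ρ ∧
      -(4 * M / (2 * (t - B))) ≤ Real.log (ernst0 M y ρ) ∧
      Real.log (ernst0 M y ρ) ≤ -(4 * M / (2 * (t + B))) := by
    intro y hy1 hy2
    set p := Real.sqrt ((y - M) ^ 2 + ρ ^ 2) + Real.sqrt ((y + M) ^ 2 + ρ ^ 2) with hp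
    have hs1 := sqrt_lb (y - M) ρ
    have hs2 := sqrt_lb (y + M) ρ
    have hs1' := sqrt_ub (y - M) ρ
    have hs2' := sqrt_ub (y + M) ρ
    have habs1 : 2 * |y| ≤ |y - M| + |y + M| := by
      rcases abs_cases y with ⟨h, _⟩ | ⟨h, _⟩ <;>
        rcases abs_cases (y - M) with ⟨h1, _⟩ | ⟨h1, _⟩ <;>
        rcases abs_cases (y + M) with ⟨h2, _⟩ | ⟨h2, _⟩ <;> linarith
    have habs2 : |y - M| ≤ |y| + M := by
      rcases abs_cases y with ⟨h, _⟩ | ⟨h, _⟩ <;>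
        rcases abs_cases (y - M) with ⟨h1, _⟩ | ⟨h1, _⟩ <;> linarith
    have habs3 : |y + M| ≤ |y| + M := by
      rcases abs_cases y with ⟨h, _⟩ | ⟨h, _⟩ <;>
        rcases abs_cases (y + M) with ⟨h1, _⟩ | ⟨h1, _⟩ <;> linarith
    have hplb : 2 * (t - |x|) ≤ p := by rw [hp]; linarith
    have hpub : p ≤ 2 * (t + |x|) + 2 * M + 2 * |ρ| := by rw [hp]; linarith
    have hp1 : 2 * M < p := by rw [hB] at ht; linarith
    obtain ⟨hpos, hlo, hhi⟩ := log_ratio_bounds M p hM hp1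
    have he : ernst0 M y ρ = (p - 2 * M) / (p + 2 * M) := rfl
    rw [he]
    refine ⟨hpos, ?_, ?_⟩
    · have hge : 2 * (t - B) ≤ p - 2 * M := by rw [hB] at *; linarith
      have hd : 4 * M / (p - 2 * M) ≤ 4 * M / (2 * (t - B)) := by
        apply div_le_div_of_nonneg_left (by linarith) (by linarith) hge
      linarith
    · have hle : p + 2 * M ≤ 2 * (t + B) := by rw [hB] at *; linarith
      have hd : 4 * M / (2 * (t + B)) ≤ 4 * M / (p + 2 * M) := by
        apply div_le_div_of_nonneg_left (by linarith) (by linarith) hle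
      linarith
  have hxt1 : t - |x| ≤ |x + t| := by
    rcases abs_cases x with ⟨h, _⟩ | ⟨h, _⟩ <;>
      rcases abs_cases (x + t) with ⟨h1, _⟩ | ⟨h1, _⟩ <;> linarith
  have hxt2 : |x + t| ≤ t + |x| := by
    rcases abs_cases x with ⟨h, _⟩ | ⟨h, _⟩ <;>
      rcases abs_cases (x + t) with ⟨h1, _⟩ | ⟨h1, _⟩ <;> linarith
  have hxt3 : t - |x| ≤ |x - t| := by
    rcases abs_cases x with ⟨h, _⟩ | ⟨h, _⟩ <;>
      rcases abs_cases (x - t) with ⟨h1, _⟩ | ⟨h1, _⟩ <;> linarith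
  have hxt4 : |x - t| ≤ t + |x| := by
    rcases abs_cases x with ⟨h, _⟩ | ⟨h, _⟩ <;>
      rcases abs_cases (x - t) with ⟨h1, _⟩ | ⟨h1, _⟩ <;> linarith
  obtain ⟨hp1, hl1, hh1⟩ := key (x + t) hxt1 hxt2
  obtain ⟨hp2, hl2, hh2⟩ := key (x - t) hxt3 hxt4
  have hppos : 0 < ernst0 M (x + t) ρ * ernst0 M (x - t) ρ * Real.exp (4 * M / t) :=
    mul_pos (mul_pos hp1 hp2) (Real.exp_pos _)
  refine ⟨hppos, ?_⟩
  have hlog : Real.log (ernst0 M (x + t) ρ * ernst0 M (x - t) ρ * Real.exp (4 * M / t)) =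
      Real.log (ernst0 M (x + t) ρ) + Real.log (ernst0 M (x - t) ρ) + 4 * M / t := by
    rw [Real.log_mul (mul_pos hp1 hp2).ne' (Real.exp_ne_zero _),
      Real.log_mul hp1.ne' hp2.ne', Real.log_exp]
  rw [hlog, abs_le]
  constructor
  · -- lower bound
    have h1 : 4 * M / t - 2 * (4 * M / (2 * (t - B))) = -(4 * M * B / (t * (t - B))) := by
      field_simp
      ring
    have h2 : 4 * M * B / (t * (t - B)) ≤ 8 * M * B / t ^ 2 := by
      rw [div_le_div_iff₀ (by positivity) (by positivity)]
      nlinarith [mul_pos hM hBpos, mul_pos ht0 htB', sq_nonneg t,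
        mul_nonneg (mul_nonneg (mul_pos hM hBpos).le ht0.le) (by linarith : (0:ℝ) ≤ t - 2 * B)]
    linarith
  · -- upper bound
    have h1 : 4 * M / t - 2 * (4 * M / (2 * (t + B))) = 4 * M * B / (t * (t + B)) := by
      field_simp
      ring
    have h2 : 4 * M * B / (t * (t + B)) ≤ 8 * M * B / t ^ 2 := by
      rw [div_le_div_iff₀ (by positivity) (by positivity)]
      nlinarith [mul_nonneg (mul_nonneg (mul_pos hM hBpos).le ht0.le) (by linarith : (0:ℝ) ≤ t + 2 * B)]
    linarith

set_option maxHeartbeats 1000000 in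
private lemma tail_tendsto (M x ρ : ℝ) (hM : 0 < M) :
    Filter.Tendsto (fun L : ℝ => ∏' n : ℕ,
      (ernst0 M (x + (n + 1) * L) ρ * ernst0 M (x - (n + 1) * L) ρ *
        Real.exp (4 * M / ((n + 1) * L)))) Filter.atTop (nhds 1) := by
  set B := |x| + 2 * M + |ρ| with hB
  have hBpos : 0 < B := by
    have := abs_nonneg x; have := abs_nonneg ρ; rw [hB]; linarith
  have hKsum : Summable (fun n : ℕ => (1 : ℝ) / ((n : ℝ) + 1) ^ 2) := by
    have h0 : Summable (fun n : ℕ => (1 : ℝ) / (n : ℝ) ^ 2) :=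
      summable_one_div_nat_pow.mpr one_lt_two
    have := (summable_nat_add_iff 1).mpr h0
    simpa [Nat.cast_add] using this
  set K : ℝ := ∑' n : ℕ, (1 : ℝ) / ((n : ℝ) + 1) ^ 2 with hK
  set F : ℝ → ℕ → ℝ := fun L n =>
    ernst0 M (x + ((n : ℝ) + 1) * L) ρ * ernst0 M (x - ((n : ℝ) + 1) * L) ρ *
      Real.exp (4 * M / (((n : ℝ) + 1) * L)) with hF
  have main : ∀ L : ℝ, 2 * B ≤ L →
      (∏' n : ℕ, F L n) = Real.exp (∑' n : ℕ, Real.log (F L n)) ∧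
      |∑' n : ℕ, Real.log (F L n)| ≤ 8 * M * B * K / L ^ 2 := by
    intro L hL
    have hL0 : 0 < L := by linarith
    have hfac : ∀ n : ℕ, 0 < F L n ∧
        |Real.log (F L n)| ≤ 8 * M * B / (((n : ℝ) + 1) * L) ^ 2 := by
      intro n
      have hn1 : (1 : ℝ) ≤ (n : ℝ) + 1 := by
        have : (0 : ℝ) ≤ (n : ℝ) := Nat.cast_nonneg n
        linarith
      have htn : 2 * B ≤ ((n : ℝ) + 1) * L := by
        calc 2 * B ≤ L := hL
          _ = 1 * L := (one_mul L).symm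
          _ ≤ ((n : ℝ) + 1) * L := by
            apply mul_le_mul_of_nonneg_right hn1 hL0.le
      exact factor_bound M x ρ hM (((n : ℝ) + 1) * L) htn
    have hbd : ∀ n : ℕ, |Real.log (F L n)| ≤
        (8 * M * B / L ^ 2) * ((1 : ℝ) / ((n : ℝ) + 1) ^ 2) := by
      intro n
      have hn0 : ((n : ℝ) + 1) ≠ 0 := by positivity
      have he : 8 * M * B / (((n : ℝ) + 1) * L) ^ 2 =
          (8 * M * B / L ^ 2) * ((1 : ℝ) / ((n : ℝ) + 1) ^ 2) := by
        field_simp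
      exact he ▸ (hfac n).2
    have hgsum : Summable (fun n : ℕ => Real.log (F L n)) := by
      apply Summable.of_abs
      exact Summable.of_nonneg_of_le (fun n => abs_nonneg _) hbd (hKsum.mul_left _)
    constructor
    · have hprod : HasProd (F L) (Real.exp (∑' n : ℕ, Real.log (F L n))) := by
        have h := hgsum.hasSum.rexp
        have heq : (Real.exp ∘ fun n => Real.log (F L n)) = F L := by
          funext n
          exact Real.exp_log (hfac n).1
        rwa [heq] at h
      exact hprod.tprod_eq
    · have s1 : |∑' n : ℕ, Real.log (F L n)| ≤ ∑' n : ℕ, |Real.log (F L n)| := by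
        have := norm_tsum_le_tsum_norm (f := fun n : ℕ => Real.log (F L n)) ?_
        · simpa [Real.norm_eq_abs] using this
        · simpa [Real.norm_eq_abs] using hgsum.abs
      have s2 : ∑' n : ℕ, |Real.log (F L n)| ≤
          ∑' n : ℕ, (8 * M * B / L ^ 2) * ((1 : ℝ) / ((n : ℝ) + 1) ^ 2) :=
        Summable.tsum_le_tsum hbd hgsum.abs (hKsum.mul_left _)
      have s3 : ∑' n : ℕ, (8 * M * B / L ^ 2) * ((1 : ℝ) / ((n : ℝ) + 1) ^ 2) =
          (8 * M * B / L ^ 2) * K := tsum_mul_left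
      calc |∑' n : ℕ, Real.log (F L n)|
          ≤ (8 * M * B / L ^ 2) * K := by rw [← s3]; exact s1.trans s2
        _ = 8 * M * B * K / L ^ 2 := by ring
  have hT : Filter.Tendsto (fun L : ℝ => ∑' n : ℕ, Real.log (F L n)) Filter.atTop (nhds 0) := by
    apply squeeze_zero_norm' ((eventually_ge_atTop (2 * B)).mono fun L hL => (main L hL).2)
    have h2 : Filter.Tendsto (fun L : ℝ => L ^ 2) Filter.atTop Filter.atTop :=
      tendsto_pow_atTop two_ne_zero
    exact Filter.Tendsto.div_atTop tendsto_const_nhds h2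
  have hE : Filter.Tendsto (fun L : ℝ => Real.exp (∑' n : ℕ, Real.log (F L n)))
      Filter.atTop (nhds 1) := by
    have := (Real.continuous_exp.tendsto 0).comp hT
    rwa [Real.exp_zero] at this
  exact hE.congr' (((eventually_ge_atTop (2 * B)).mono fun L hL => ((main L hL).1).symm))

/-- In the limit `L → ∞` the periodic Ernst potential converges pointwise to the
ordinary Schwarzschild Ernst potential (at every point with `ρ > 0`, or on the axis
outside the horizon). -/
theorem ernstPeriodic_tendsto_schwarzschild (M : ℝ) (hM : 0 < M) (x ρ : ℝ)
    (h : 0 < ρ ∨ (ρ = 0 ∧ M < |x|)) :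
    Filter.Tendsto (fun L : ℝ => ernstPeriodic M L x ρ) Filter.atTop
      (nhds (ernst0 M x ρ)) := by
  have h1 := tail_tendsto M x ρ hM
  have h2 := h1.const_mul (ernst0 M x ρ)
  simpa [ernstPeriodic, mul_one] using h2
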